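/- arXiv:2208.11542 — 4 statements merged into one kernel-verified Lean document; each statement's English description precedes it below -/
import Mathlib

section
/- Let X be a compact convex subset of ℝ^d with vol(X) > 0 and let (x_j)_{j≥1} be independent random points in X where x_j has distribution P_j = α_j P_U + (1 − α_j) Q_j, with P_U the uniform distribution on X, Q_j arbitrary probability measures on X, and 0 ≤ α_j ≤ 1. If Σ_{j=1}^∞ α_j = ∞, then with probability 1, for every x ∈ X and every ε > 0 the sequence (x_j) falls into the set X ∩ B(x, ε) infinitely often; in particular the sequence of points is almost surely dense in X. -/
open MeasureTheory ProbabilityTheory Metric Filter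
open scoped ENNReal

/-- Positivity of the volume of `X ∩ B(y,ε)` for a convex body `X` and `y ∈ X`. -/
lemma grs_vol_inter_ball_pos {d : ℕ} {X : Set (EuclideanSpace ℝ (Fin d))}
    (hXconv : Convex ℝ X) (hXvol : 0 < volume X) {y : EuclideanSpace ℝ (Fin d)}
    (hy : y ∈ X) {ε : ℝ} (hε : 0 < ε) : 0 < volume (X ∩ closedBall y ε) := by
  have hint : (interior X).Nonempty := by
    by_contra h
    rw [Set.not_nonempty_iff_eq_empty] at h
    have hspan : affineSpan ℝ X ≠ ⊤ := by
      intro htop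
      rw [← hXconv.interior_nonempty_iff_affineSpan_eq_top] at htop
      simp [h, Set.not_nonempty_empty] at htop
    have h0 : volume X = 0 :=
      measure_mono_null (subset_affineSpan ℝ X)
        (Measure.addHaar_affineSubspace volume _ hspan)
    simp [h0] at hXvol
  obtain ⟨z, hz⟩ := hint
  set t : ℝ := min (1/2) (ε / (2 * (‖z - y‖ + 1))) with ht_def
  have hnorm_pos : (0:ℝ) < ‖z - y‖ + 1 := by positivity
  have ht_pos : 0 < t := by
    apply lt_min (by norm_num)
    positivity
  have ht_lt : t < 1 := lt_of_le_of_lt (min_le_left _ _) (by norm_num)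
  set w : EuclideanSpace ℝ (Fin d) := y + t • (z - y) with hw_def
  have hw_mem : w ∈ interior X := by
    have : w ∈ openSegment ℝ y z := by
      refine ⟨1 - t, t, by linarith, ht_pos, by ring, ?_⟩
      simp only [hw_def]
      module
    exact hXconv.openSegment_self_interior_subset_interior hy hz this
  have hdistwy : dist w y < ε / 2 := by
    have : dist w y = t * ‖z - y‖ := by
      rw [hw_def, dist_eq_norm, add_sub_cancel_left, norm_smul,
        Real.norm_eq_abs, abs_of_pos ht_pos]
    rw [this]
    have h1 : t ≤ ε / (2 * (‖z - y‖ + 1)) := min_le_right _ _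
    calc t * ‖z - y‖ ≤ (ε / (2 * (‖z - y‖ + 1))) * ‖z - y‖ := by
          apply mul_le_mul_of_nonneg_right h1 (norm_nonneg _)
      _ < ε / 2 := by
          rw [div_mul_eq_mul_div, div_lt_div_iff₀ (by positivity) (by norm_num)]
          nlinarith [norm_nonneg (z - y)]
  obtain ⟨δ, hδpos, hδ⟩ := Metric.isOpen_iff.1 isOpen_interior w hw_mem
  set δ' : ℝ := min δ (ε / 2) with hδ'_def
  have hδ'pos : 0 < δ' := lt_min hδpos (by linarith)
  have hsub : ball w δ' ⊆ X ∩ closedBall y ε := by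
    intro u hu
    rw [mem_ball] at hu
    constructor
    · exact interior_subset (hδ (mem_ball.2 (lt_of_lt_of_le hu (min_le_left _ _))))
    · rw [mem_closedBall]
      calc dist u y ≤ dist u w + dist w y := dist_triangle _ _ _
        _ ≤ ε / 2 + ε / 2 := by
            have := lt_of_lt_of_le hu (min_le_right _ _)
            exact add_le_add this.le hdistwy.le
        _ = ε := by ring
  exact lt_of_lt_of_le (measure_ball_pos volume w hδ'pos) (measure_mono hsub)


lemma grs_key {d : ℕ} {X : Set (EuclideanSpace ℝ (Fin d))} (hXfin : volume X ≠ ⊤)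
    {Ω : Type*} {mΩ : MeasurableSpace Ω} (P : Measure Ω) [IsProbabilityMeasure P]
    (x : ℕ → Ω → EuclideanSpace ℝ (Fin d)) (hmeas : ∀ j, Measurable (x j))
    (hindep : iIndepFun (m := fun _ : ℕ => (inferInstance : MeasurableSpace (EuclideanSpace ℝ (Fin d)))) x P)
    (α : ℕ → ℝ) (hα : ∀ j, 0 ≤ α j ∧ α j ≤ 1)
    (Q : ℕ → Measure (EuclideanSpace ℝ (Fin d)))
    (hlaw : ∀ j, Measure.map (x j) P =
      ENNReal.ofReal (α j) • ((volume X)⁻¹ • volume.restrict X)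
        + ENNReal.ofReal (1 - α j) • Q j)
    (hdiv : Tendsto (fun n => ∑ j ∈ Finset.range n, α j) atTop atTop)
    {S : Set (EuclideanSpace ℝ (Fin d))} (hS : MeasurableSet S) (hSX : S ⊆ X)
    (hSvol : 0 < volume S) :
    ∀ᵐ ω ∂P, ∃ᶠ j in atTop, x j ω ∈ S := by
  set A : ℕ → Set Ω := fun j => x j ⁻¹' S with hA_def
  have hAm : ∀ j, MeasurableSet (A j) := fun j => (hmeas j) hS
  -- lower bound on P (A j)
  set c : ℝ≥0∞ := (volume X)⁻¹ * volume S with hc_def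
  have hc_pos : c ≠ 0 := by
    apply mul_ne_zero
    · exact ENNReal.inv_ne_zero.2 hXfin
    · exact hSvol.ne'
  have hPA : ∀ j, ENNReal.ofReal (α j) * c ≤ P (A j) := by
    intro j
    have hm : P (A j) = Measure.map (x j) P S := (Measure.map_apply (hmeas j) hS).symm
    rw [hm, hlaw j]
    simp only [Measure.add_apply, Measure.smul_apply, smul_eq_mul]
    have hres : (volume.restrict X) S = volume S := by
      rw [Measure.restrict_apply hS, Set.inter_eq_self_of_subset_left hSX]
    rw [hres]
    exact le_self_add
  -- divergence of the sum
  have hsumα : ∑' j, ENNReal.ofReal (α j) = ⊤ := by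
    by_contra h
    have hb : ∀ n, ∑ j ∈ Finset.range n, α j ≤ (∑' j, ENNReal.ofReal (α j)).toReal := by
      intro n
      have h1 : ENNReal.ofReal (∑ j ∈ Finset.range n, α j) ≤ ∑' j, ENNReal.ofReal (α j) := by
        rw [ENNReal.ofReal_sum_of_nonneg (fun j _ => (hα j).1)]
        exact ENNReal.sum_le_tsum _
      have h2 := ENNReal.toReal_mono h h1
      rwa [ENNReal.toReal_ofReal (Finset.sum_nonneg fun j _ => (hα j).1)] at h2
    obtain ⟨n, hn⟩ := (hdiv.eventually_ge_atTop ((∑' j, ENNReal.ofReal (α j)).toReal + 1)).exists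
    linarith [hb n]
  have hsum : ∑' j, P (A j) = ∞ := by
    rw [eq_top_iff]
    calc (⊤ : ℝ≥0∞) = (∑' j, ENNReal.ofReal (α j)) * c := by
          rw [hsumα, ENNReal.top_mul hc_pos]
      _ = ∑' j, ENNReal.ofReal (α j) * c := (ENNReal.tsum_mul_right).symm
      _ ≤ ∑' j, P (A j) := ENNReal.tsum_le_tsum hPA
  -- independence of the events
  have hiid : iIndepSet A P := by
    rw [iIndepSet_iff_meas_biInter hAm]
    intro s
    exact hindep.measure_inter_preimage_eq_mul s (fun i _ => hS)
  have hone := measure_limsup_eq_one hAm hiid hsum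
  have := (prob_compl_eq_zero_iff (MeasurableSet.measurableSet_limsup hAm)).2 hone
  have hae : ∀ᵐ ω ∂P, ω ∈ limsup A atTop := by
    rw [ae_iff]
    exact this
  filter_upwards [hae] with ω hω
  rwa [mem_limsup_iff_frequently_mem] at hω

/-- **Convergence of GRS with the mixture sampling scheme.**
If independent points `x j` are sampled from `P_j = α_j P_U + (1-α_j) Q_j`,
where `P_U` is the uniform distribution on a compact convex body `X` and
`∑ α_j = ∞`, then with probability 1 the sequence visits every set
`X ∩ B(x, ε)` (`x ∈ X`, `ε > 0`) infinitely often; in particular it is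
almost surely dense in `X`. -/
theorem grs_mixture_dense
    {d : ℕ} (X : Set (EuclideanSpace ℝ (Fin d)))
    (hXc : IsCompact X) (hXconv : Convex ℝ X) (hXvol : 0 < volume X)
    {Ω : Type*} {mΩ : MeasurableSpace Ω} (P : Measure Ω) [IsProbabilityMeasure P]
    (x : ℕ → Ω → EuclideanSpace ℝ (Fin d)) (hmeas : ∀ j, Measurable (x j))
    (hindep : iIndepFun (m := fun _ : ℕ => (inferInstance : MeasurableSpace (EuclideanSpace ℝ (Fin d)))) x P)
    (α : ℕ → ℝ) (hα : ∀ j, 0 ≤ α j ∧ α j ≤ 1)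
    (Q : ℕ → Measure (EuclideanSpace ℝ (Fin d)))
    (hQprob : ∀ j, IsProbabilityMeasure (Q j)) (hQsupp : ∀ j, Q j Xᶜ = 0)
    (hlaw : ∀ j, Measure.map (x j) P =
      ENNReal.ofReal (α j) • ((volume X)⁻¹ • volume.restrict X)
        + ENNReal.ofReal (1 - α j) • Q j)
    (hdiv : Tendsto (fun n => ∑ j ∈ Finset.range n, α j) atTop atTop) :
    ∀ᵐ ω ∂P, ∀ y ∈ X, ∀ ε > (0 : ℝ),
      ∃ᶠ j in atTop, x j ω ∈ X ∩ closedBall y ε := by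
  have hXfin : volume X ≠ ⊤ := hXc.measure_lt_top.ne
  have hXm : MeasurableSet X := hXc.isClosed.measurableSet
  set u : ℕ → EuclideanSpace ℝ (Fin d) := TopologicalSpace.denseSeq _ with hu_def
  have hu : DenseRange u := TopologicalSpace.denseRange_denseSeq _
  set S : ℕ × ℕ → Set (EuclideanSpace ℝ (Fin d)) :=
    fun p => X ∩ closedBall (u p.1) (1/((p.2 : ℝ)+1)) with hS_def
  have hae : ∀ᵐ ω ∂P, ∀ p : ℕ × ℕ, 0 < volume (S p) → ∃ᶠ j in atTop, x j ω ∈ S p := by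
    rw [ae_all_iff]
    intro p
    by_cases hp : 0 < volume (S p)
    · have := grs_key hXfin P x hmeas hindep α hα Q hlaw hdiv
        (hXm.inter measurableSet_closedBall) Set.inter_subset_left hp
      filter_upwards [this] with ω h _
      exact h
    · filter_upwards with ω h
      exact absurd h hp
  filter_upwards [hae] with ω hω
  intro y hy ε hε
  obtain ⟨k, hk⟩ := exists_nat_one_div_lt (show (0:ℝ) < ε/2 by linarith)
  set r : ℝ := 1/((k : ℝ)+1) with hr_def
  have hrpos : 0 < r := by positivity
  obtain ⟨n, hn⟩ := hu.exists_dist_lt y (half_pos hrpos)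
  have hvol : 0 < volume (S (n, k)) := by
    refine lt_of_lt_of_le (grs_vol_inter_ball_pos hXconv hXvol hy (half_pos hrpos))
      (measure_mono ?_)
    intro w hw
    refine ⟨hw.1, ?_⟩
    rw [mem_closedBall]
    calc dist w (u n) ≤ dist w y + dist y (u n) := dist_triangle _ _ _
      _ ≤ r/2 + r/2 := add_le_add (mem_closedBall.1 hw.2) hn.le
      _ = r := by ring
  have hsub : S (n, k) ⊆ X ∩ closedBall y ε := by
    intro w hw
    refine ⟨hw.1, ?_⟩
    rw [mem_closedBall]
    have h2 : dist w (u n) ≤ r := mem_closedBall.1 hw.2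
    calc dist w y ≤ dist w (u n) + dist (u n) y := dist_triangle _ _ _
      _ ≤ r + r/2 := by
          refine add_le_add h2 ?_
          rw [dist_comm]
          exact hn.le.trans (by linarith)
      _ ≤ ε := by
          have : r < ε/2 := hk
          linarith
  exact (hω (n, k) hvol).mono (fun j hj => hsub hj)
end

section
/- Let X ⊂ ℝ^d be a compact convex set with vol(X) = 1, let x_1, x_2, … be i.i.d. random points uniformly distributed on X, let X_n = {x_1, …, x_n}, and let U be uniformly distributed on X independently of the x_j. Let ρ(U, X_n) = min_{1≤j≤n} ‖U − x_j‖ (Euclidean norm) and define F_n(t) = Pr( n^{1/d} V_d^{1/d} ρ(U, X_n) ≤ t ), where V_d = π^{d/2}/Γ(d/2 + 1) is the volume of the unit Euclidean ball. Then F_n(t) → F(t) := 1 − exp(−t^d) as n → ∞, uniformly in t ≥ 0. -/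
open MeasureTheory ProbabilityTheory Filter
open scoped ENNReal




lemma polya_unif {F : ℕ → ℝ → ℝ} {f : ℝ → ℝ}
    (hFmono : ∀ n, Monotone (F n)) (hFle : ∀ n t, F n t ≤ 1)
    (hfc : Continuous f) (hfm : MonotoneOn f (Set.Ici 0))
    (hflim : Tendsto f atTop (nhds 1))
    (hpt : ∀ t : ℝ, 0 ≤ t → Tendsto (fun n => F n t) atTop (nhds (f t))) :
    TendstoUniformlyOn F f atTop (Set.Ici 0) := by
  rw [Metric.tendstoUniformlyOn_iff]
  intro ε hε
  have hε4 : 0 < ε / 4 := by linarith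
  obtain ⟨T0, hT0⟩ := (Filter.eventually_atTop).1 (hflim.eventually
    (Metric.closedBall_mem_nhds (1 : ℝ) hε4))
  set T : ℝ := max T0 0 with hTdef
  have hT0le : (0:ℝ) ≤ T := le_max_right _ _
  have hfT : 1 - f T ≤ ε / 4 := by
    have h := hT0 T (le_max_left _ _)
    rw [Real.dist_eq, abs_le] at h
    linarith [h.1]
  have hfle1 : ∀ t : ℝ, 0 ≤ t → f t ≤ 1 := by
    intro t ht
    refine ge_of_tendsto hflim ?_
    filter_upwards [eventually_ge_atTop (max t 0)] with u hu
    exact hfm ht (le_trans (le_max_right t 0) hu) (le_trans (le_max_left t 0) hu)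
  have hunif : UniformContinuousOn f (Set.Icc 0 T) :=
    (isCompact_Icc).uniformContinuousOn_of_continuous (hfc.continuousOn)
  rw [Metric.uniformContinuousOn_iff] at hunif
  obtain ⟨δ, hδ, hδ'⟩ := hunif (ε / 4) hε4
  obtain ⟨k0, hk0⟩ := exists_nat_gt (T / δ)
  set k : ℕ := k0 + 1 with hkdef
  have hkpos : (0:ℝ) < k := by positivity
  have hTk : T / k < δ := by
    rw [div_lt_iff₀ hkpos]
    have h1 : T / δ < k := lt_of_lt_of_le hk0 (by exact_mod_cast Nat.le_succ k0)
    calc T = (T / δ) * δ := by field_simp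
    _ < k * δ := by apply mul_lt_mul_of_pos_right h1 hδ
    _ = δ * k := by ring
  set g : ℕ → ℝ := fun i => i * T / k with hgdef
  have hgmem : ∀ i : ℕ, i ≤ k → g i ∈ Set.Icc (0:ℝ) T := by
    intro i hi
    constructor
    · positivity
    · rw [hgdef, div_le_iff₀ hkpos]
      have : (i:ℝ) ≤ k := by exact_mod_cast hi
      calc (i:ℝ) * T ≤ (k:ℝ) * T := by apply mul_le_mul_of_nonneg_right this hT0le
      _ = T * k := by ring
  have hgk : g k = T := by rw [hgdef]; field_simp
  have hgap : ∀ i : ℕ, g (i+1) - g i = T / k := by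
    intro i; rw [hgdef]; push_cast; ring
  have hev : ∀ᶠ n in atTop, ∀ i ∈ Finset.range (k+1), |F n (g i) - f (g i)| < ε / 4 := by
    rw [eventually_all_finset]
    intro i hi
    have hik' : i ≤ k := by have := Finset.mem_range.mp hi; omega
    have hgi0 : (0:ℝ) ≤ g i := (hgmem i hik').1
    have h := (hpt (g i) hgi0).eventually (Metric.ball_mem_nhds (f (g i)) hε4)
    filter_upwards [h] with n hn
    rw [Real.dist_eq] at hn
    exact hn
  filter_upwards [hev] with n hn
  intro t ht
  rw [Set.mem_Ici] at ht
  rcases le_or_gt t T with htT | htT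
  · rcases eq_or_lt_of_le hT0le with hT0' | hT0'
    · have ht0 : t = 0 := le_antisymm (by linarith) ht
      have h0 : |F n (g 0) - f (g 0)| < ε / 4 := hn 0 (Finset.mem_range.mpr (by omega))
      have hg0 : g 0 = 0 := by simp [hgdef]
      rw [hg0] at h0
      rw [abs_lt] at h0
      rw [ht0, Real.dist_eq, abs_lt]
      constructor <;> linarith
    · set i : ℕ := min (⌊t * k / T⌋₊) (k-1) with hidef
      have hik : i + 1 ≤ k := by
        have : i ≤ k - 1 := min_le_right _ _
        omega
      have hx0 : 0 ≤ t * k / T := by positivity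
      have ha : g i ≤ t := by
        rw [hgdef, div_le_iff₀ hkpos]
        rcases min_cases (⌊t * k / T⌋₊) (k-1) with ⟨h1, _⟩ | ⟨h1, h2⟩
        · have h3 : (i:ℝ) ≤ t * k / T := by
            rw [hidef, h1]; exact Nat.floor_le hx0
          calc (i:ℝ) * T ≤ (t * k / T) * T := mul_le_mul_of_nonneg_right h3 hT0le
          _ = t * k := by field_simp
        · have h5 : k ≤ ⌊t * k / T⌋₊ := by omega
          have h3 : (k:ℝ) ≤ t * k / T :=
            le_trans (by exact_mod_cast h5) (Nat.floor_le hx0)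
          have h4 : (i:ℝ) ≤ (k:ℝ) := by
            exact_mod_cast le_trans (min_le_right _ _) (Nat.sub_le k 1)
          calc (i:ℝ) * T ≤ (k:ℝ) * T := mul_le_mul_of_nonneg_right h4 hT0le
          _ ≤ (t * k / T) * T := mul_le_mul_of_nonneg_right h3 hT0le
          _ = t * k := by field_simp
      have hb : t ≤ g (i+1) := by
        rw [hgdef, le_div_iff₀ hkpos]
        rcases min_cases (⌊t * k / T⌋₊) (k-1) with ⟨h1, _⟩ | ⟨h1, h2⟩
        · have h3 : t * k / T < (i:ℝ) + 1 := by
            rw [hidef, h1]; push_cast; exact Nat.lt_floor_add_one _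
          have h6 : t * k / T * T ≤ ((i:ℝ)+1) * T := mul_le_mul_of_nonneg_right h3.le hT0le
          calc t * k = t * k / T * T := by field_simp
          _ ≤ ((i:ℝ)+1) * T := h6
          _ = ((i+1:ℕ):ℝ) * T := by push_cast; ring
        · have h4 : i + 1 = k := by omega
          rw [h4]
          calc t * k ≤ T * k := mul_le_mul_of_nonneg_right htT hkpos.le
          _ = (k:ℝ) * T := by ring
      have hmemi : g i ∈ Set.Icc (0:ℝ) T := hgmem i (by omega)
      have hmemi1 : g (i+1) ∈ Set.Icc (0:ℝ) T := hgmem (i+1) hik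
      have hmemt : t ∈ Set.Icc (0:ℝ) T := ⟨ht, htT⟩
      have h1 : |F n (g i) - f (g i)| < ε / 4 := hn i (Finset.mem_range.mpr (by omega))
      have h2 : |F n (g (i+1)) - f (g (i+1))| < ε / 4 := hn (i+1) (Finset.mem_range.mpr (by omega))
      have h3 : dist (f (g i)) (f t) < ε / 4 := by
        apply hδ' _ hmemi _ hmemt
        rw [Real.dist_eq, abs_lt]
        constructor <;> linarith [hgap i, hTk]
      have h4 : dist (f (g (i+1))) (f t) < ε / 4 := by
        apply hδ' _ hmemi1 _ hmemt
        rw [Real.dist_eq, abs_lt]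
        constructor <;> linarith [hgap i, hTk]
      rw [Real.dist_eq, abs_lt]
      rw [Real.dist_eq, abs_lt] at h3 h4
      rw [abs_lt] at h1 h2
      have hm1 : F n (g i) ≤ F n t := hFmono n ha
      have hm2 : F n t ≤ F n (g (i+1)) := hFmono n hb
      constructor <;> linarith
  · have hk1 : |F n (g k) - f (g k)| < ε / 4 := hn k (Finset.mem_range.mpr (by omega))
    rw [hgk, abs_lt] at hk1
    have hm : F n T ≤ F n t := hFmono n htT.le
    have hft : f T ≤ f t := hfm hT0le (le_trans hT0le htT.le) htT.le
    have hft1 : f t ≤ 1 := hfle1 t ht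
    have hFt1 : F n t ≤ 1 := hFle n t
    rw [Real.dist_eq, abs_lt]
    constructor <;> linarith




lemma joint_formula {E : Type*} [MeasurableSpace E] [MetricSpace E] [BorelSpace E]
    [SecondCountableTopology E]
    {Ω : Type*} {mΩ : MeasurableSpace Ω} (P : Measure Ω) [IsProbabilityMeasure P]
    (z : ℕ → Ω → E) (hmeas : ∀ j, Measurable (z j))
    (hindep : iIndepFun z P)
    (μ : Measure E) [IsProbabilityMeasure μ] (hμ : ∀ j, Measure.map (z j) P = μ)
    (n : ℕ) (hn : 0 < n) (s : ℝ) :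
    P {ω | (⨅ j : Fin n, dist (z 0 ω) (z ((j:ℕ) + 1) ω)) ≤ s}
      = 1 - ∫⁻ u, (1 - μ (Metric.closedBall u s))^n ∂μ := by
  classical
  haveI : Nonempty (Fin n) := ⟨⟨0, hn⟩⟩
  set Y : Ω → (Fin n → E) := fun ω j => z ((j:ℕ)+1) ω with hYdef
  have hY : Measurable Y := measurable_pi_lambda _ fun j => hmeas _
  set T : Finset ℕ := Finset.image (fun j : Fin n => (j:ℕ)+1) Finset.univ with hTdef
  -- law of Y is the product measure
  have hYlaw : Measure.map Y P = Measure.pi (fun _ : Fin n => μ) := by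
    refine (Measure.pi_eq fun t ht => ?_).symm
    rw [Measure.map_apply hY (MeasurableSet.univ_pi ht)]
    set sets : ℕ → Set E := fun m => if h : m - 1 < n ∧ 1 ≤ m then t ⟨m-1, h.1⟩ else Set.univ
      with hsetsdef
    have hsets : ∀ j : Fin n, sets ((j:ℕ)+1) = t j := by
      intro j
      have h : (j:ℕ)+1-1 < n ∧ 1 ≤ (j:ℕ)+1 := ⟨by simpa using j.isLt, by omega⟩
      rw [hsetsdef]
      simp only [dif_pos h]
      exact congrArg t (Fin.ext (by simp))
    have hpre : Y ⁻¹' (Set.univ.pi t) = ⋂ i ∈ T, z i ⁻¹' sets i := by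
      ext ω
      simp only [Set.mem_preimage, Set.mem_pi, Set.mem_univ, forall_true_left, Set.mem_iInter,
        hTdef, Finset.mem_image, Finset.mem_univ, true_and]
      constructor
      · rintro h i ⟨j, rfl⟩
        rw [hsets j]
        exact h j
      · intro h j
        have := h ((j:ℕ)+1) ⟨j, rfl⟩
        rwa [hsets j] at this
    have hmeassets : ∀ i ∈ T, MeasurableSet (sets i) := by
      intro i _
      rw [hsetsdef]
      beta_reduce
      split_ifs with h
      · exact ht _
      · exact MeasurableSet.univ
    rw [hpre, hindep.measure_inter_preimage_eq_mul T hmeassets]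
    rw [hTdef, Finset.prod_image
      (fun a _ b _ hab => Fin.val_injective (Nat.succ_injective hab))]
    apply Finset.prod_congr rfl
    intro j _
    rw [hsets j, ← hμ ((j:ℕ)+1), Measure.map_apply (hmeas _) (ht j)]
  -- independence of z 0 and Y
  have h0T : (0:ℕ) ∉ T := by simp [hTdef]
  have hdisj : Disjoint ({0} : Finset ℕ) T := by
    simp [Finset.disjoint_left, h0T]
  have hpair0 := hindep.indepFun_finset {0} T hdisj hmeas
  have hpair : IndepFun (z 0) Y P := by
    have h0mem : (0:ℕ) ∈ ({0} : Finset ℕ) := Finset.mem_singleton_self 0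
    have hmemT : ∀ j : Fin n, ((j:ℕ)+1) ∈ T := by
      intro j; rw [hTdef]; exact Finset.mem_image_of_mem _ (Finset.mem_univ j)
    set φ : (∀ _i : ({0} : Finset ℕ), E) → E := fun v => v ⟨0, h0mem⟩ with hφdef
    set ψ : (∀ _i : (T : Finset ℕ), E) → (Fin n → E) := fun v j => v ⟨(j:ℕ)+1, hmemT j⟩ with hψdef
    have hφ : Measurable φ := measurable_pi_apply _
    have hψ : Measurable ψ := measurable_pi_lambda _ fun j => measurable_pi_apply _
    exact hpair0.comp hφ hψ
  -- joint law
  have hW : Measure.map (fun ω => (z 0 ω, Y ω)) P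
      = μ.prod (Measure.pi fun _ : Fin n => μ) := by
    rw [(indepFun_iff_map_prod_eq_prod_map_map (hmeas 0).aemeasurable hY.aemeasurable).mp hpair,
      hμ 0, hYlaw]
  set G : Set (E × (Fin n → E)) := {p | ∀ j : Fin n, s < dist p.1 (p.2 j)} with hGdef
  have hGmeas : MeasurableSet G := by
    have hG2 : G = ⋂ j : Fin n, {p : E × (Fin n → E) | s < dist p.1 (p.2 j)} := by
      ext p; simp [hGdef]
    rw [hG2]
    refine MeasurableSet.iInter fun j => ?_
    exact measurableSet_lt measurable_const
      (continuous_fst.dist ((continuous_apply j).comp continuous_snd)).measurable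
  have hA : {ω | (⨅ j : Fin n, dist (z 0 ω) (z ((j:ℕ)+1) ω)) ≤ s}
      = ((fun ω => (z 0 ω, Y ω)) ⁻¹' G)ᶜ := by
    ext ω
    simp only [Set.mem_setOf_eq, Set.mem_compl_iff, Set.mem_preimage, hGdef, not_forall, not_lt]
    constructor
    · intro h
      obtain ⟨j0, hj0⟩ := Finite.exists_min (fun j : Fin n => dist (z 0 ω) (z ((j:ℕ)+1) ω))
      refine ⟨j0, le_trans ?_ h⟩
      exact le_ciInf hj0
    · rintro ⟨j, hj⟩
      refine le_trans (ciInf_le ?_ j) hj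
      exact ⟨0, by rintro x ⟨j', rfl⟩; exact dist_nonneg⟩
  have hAm : MeasurableSet ((fun ω => (z 0 ω, Y ω)) ⁻¹' G) := ((hmeas 0).prodMk hY) hGmeas
  rw [hA, measure_compl hAm (measure_ne_top _ _), measure_univ]
  congr 1
  rw [← Measure.map_apply ((hmeas 0).prodMk hY) hGmeas, hW, Measure.prod_apply hGmeas]
  apply lintegral_congr
  intro u
  have hfiber : Prod.mk u ⁻¹' G = Set.univ.pi (fun _ : Fin n => {v | s < dist u v}) := by
    ext y; simp [hGdef, Set.mem_pi]
  rw [hfiber, Measure.pi_pi, Finset.prod_const, Finset.card_univ, Fintype.card_fin]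
  congr 1
  have hset : {v | s < dist u v} = (Metric.closedBall u s)ᶜ := by
    ext v; simp [Metric.mem_closedBall, dist_comm, not_le]
  rw [hset, measure_compl measurableSet_closedBall (measure_ne_top _ _), measure_univ]




lemma lintegral_limit {d : ℕ} {X : Set (EuclideanSpace ℝ (Fin d))}
    (hXconv : Convex ℝ X) (hXvol : volume X = 1)
    {a : ℝ} (ha : 0 ≤ a) {r : ℕ → ℝ}
    (hr : Tendsto r atTop (nhds 0))
    (hvol : ∀ n : ℕ, 1 ≤ n → ∀ u : EuclideanSpace ℝ (Fin d),
        volume (Metric.closedBall u (r n)) = ENNReal.ofReal (a / n)) :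
    Tendsto (fun n => ∫⁻ u, (1 - (volume.restrict X) (Metric.closedBall u (r n)))^n
        ∂(volume.restrict X)) atTop (nhds (ENNReal.ofReal (Real.exp (-a)))) := by
  set μ : Measure (EuclideanSpace ℝ (Fin d)) := volume.restrict X with hμdef
  haveI : IsProbabilityMeasure μ := ⟨by rw [Measure.restrict_apply_univ]; exact hXvol⟩
  have hmeasB : ∀ ρ : ℝ, Measurable (fun u : EuclideanSpace ℝ (Fin d) => μ (Metric.closedBall u ρ)) := by
    intro ρ
    have heq : (fun u : EuclideanSpace ℝ (Fin d) => μ (Metric.closedBall u ρ)) = fun u =>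
        μ (Prod.mk u ⁻¹' {p : EuclideanSpace ℝ (Fin d) × EuclideanSpace ℝ (Fin d) |
          dist p.2 p.1 ≤ ρ}) := by
      funext u
      congr 1
    rw [heq]
    exact measurable_measure_prodMk_left (ν := μ)
      (measurableSet_le (continuous_snd.dist continuous_fst).measurable measurable_const)
  -- the ENNReal limit of (1 - a/n)^n
  have htend : Tendsto (fun n : ℕ => (1 - ENNReal.ofReal (a / n))^n) atTop
      (nhds (ENNReal.ofReal (Real.exp (-a)))) := by
    have hreal : Tendsto (fun n : ℕ => (1 - a / n)^n) atTop (nhds (Real.exp (-a))) := by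
      have := Real.tendsto_one_add_div_pow_exp (-a)
      refine this.congr fun n => ?_
      rw [neg_div, ← sub_eq_add_neg]
    have h2 : Tendsto (fun n : ℕ => ENNReal.ofReal ((1 - a / n)^n)) atTop
        (nhds (ENNReal.ofReal (Real.exp (-a)))) :=
      (ENNReal.continuous_ofReal.tendsto _).comp hreal
    refine h2.congr' ?_
    filter_upwards [eventually_ge_atTop (⌈a⌉₊ + 1)] with n hn
    have hna : a ≤ n := le_trans (Nat.le_ceil a) (by exact_mod_cast Nat.le_of_succ_le hn)
    have hn0 : (0:ℝ) < n := lt_of_lt_of_le (by positivity) (by exact_mod_cast hn : ((⌈a⌉₊+1:ℕ):ℝ) ≤ n)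
    have h3 : 0 ≤ 1 - a / n := by
      rw [sub_nonneg, div_le_one hn0]; exact hna
    rw [ENNReal.ofReal_pow h3, ENNReal.ofReal_sub 1 (by positivity), ENNReal.ofReal_one]
  -- a.e. interior
  have hae : ∀ᵐ u ∂μ, u ∈ interior X := by
    rw [ae_iff]
    have hsub : {u : EuclideanSpace ℝ (Fin d) | ¬ u ∈ interior X} ∩ X ⊆ frontier X := by
      intro x hx
      exact ⟨subset_closure hx.2, hx.1⟩
    rw [hμdef, Measure.restrict_apply (by
      exact (isOpen_interior.measurableSet.compl :
        MeasurableSet {u : EuclideanSpace ℝ (Fin d) | ¬ u ∈ interior X}))]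
    exact measure_mono_null hsub (hXconv.addHaar_frontier volume)
  have hconst : (nhds (ENNReal.ofReal (Real.exp (-a))))
      = nhds (∫⁻ _u, ENNReal.ofReal (Real.exp (-a)) ∂μ) := by
    rw [lintegral_const, measure_univ, mul_one]
  rw [hconst]
  refine tendsto_lintegral_of_dominated_convergence (fun _ => 1)
    (fun n => ((measurable_const.sub (hmeasB (r n))).pow_const n))
    (fun n => Filter.Eventually.of_forall fun u => pow_le_one' tsub_le_self n) ?_ ?_
  · rw [lintegral_one, measure_univ]
    exact ENNReal.one_ne_top
  filter_upwards [hae] with u hu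
  obtain ⟨ε, hε, hball⟩ := Metric.mem_nhds_iff.mp (mem_interior_iff_mem_nhds.mp hu)
  refine htend.congr' ?_
  have hev1 : ∀ᶠ n : ℕ in atTop, r n < ε / 2 :=
    hr.eventually (eventually_lt_nhds (by positivity : (0:ℝ) < ε / 2))
  filter_upwards [hev1, eventually_ge_atTop 1] with n hrn hn1
  have hsub : Metric.closedBall u (r n) ⊆ X := by
    refine subset_trans (Metric.closedBall_subset_ball ?_) hball
    linarith
  have : μ (Metric.closedBall u (r n)) = ENNReal.ofReal (a / n) := by
    rw [hμdef, Measure.restrict_apply measurableSet_closedBall,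
      Set.inter_eq_self_of_subset_left hsub]
    exact hvol n hn1 u
  rw [this]

/-- **Lemma 1 (Zador).** Let `X ⊂ ℝ^d` be a compact convex body of volume 1,
let `z 0 = U, z 1, z 2, …` be i.i.d. points uniformly distributed on `X`, and
let `ρ(U, X_n) = min_{1 ≤ j ≤ n} ‖U - z j‖`. Then the cdf
`F_n(t) = Pr(n^{1/d} V_d^{1/d} ρ(U, X_n) ≤ t)` converges, uniformly in
`t ≥ 0`, to `F(t) = 1 - exp (-t^d)`, where `V_d = π^{d/2}/Γ(d/2+1)`. -/
theorem normalized_nearest_distance_tendsto_weibull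
    {d : ℕ} (hd : 0 < d)
    (X : Set (EuclideanSpace ℝ (Fin d)))
    (hXc : IsCompact X) (hXconv : Convex ℝ X) (hXvol : volume X = 1)
    {Ω : Type*} {mΩ : MeasurableSpace Ω} (P : Measure Ω) [IsProbabilityMeasure P]
    (z : ℕ → Ω → EuclideanSpace ℝ (Fin d)) (hmeas : ∀ j, Measurable (z j))
    (hindep : iIndepFun z P)
    (hlaw : ∀ j, Measure.map (z j) P = volume.restrict X)
    (Vd : ℝ) (hVd : Vd = Real.pi ^ ((d : ℝ) / 2) / Real.Gamma ((d : ℝ) / 2 + 1)) :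
    TendstoUniformlyOn
      (fun (n : ℕ) (t : ℝ) =>
        (P {ω | (n : ℝ) ^ ((1 : ℝ) / d) * Vd ^ ((1 : ℝ) / d) *
            (⨅ j : Fin n, dist (z 0 ω) (z ((j : ℕ) + 1) ω)) ≤ t}).toReal)
      (fun t => 1 - Real.exp (-(t ^ d)))
      atTop (Set.Ici 0) := by
  have hdR : (0:ℝ) < d := by exact_mod_cast hd
  haveI : Nonempty (Fin d) := ⟨⟨0, hd⟩⟩
  have hΓ : 0 < Real.Gamma ((d:ℝ)/2 + 1) := Real.Gamma_pos_of_pos (by positivity)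
  have hVdpos : 0 < Vd := by
    rw [hVd]; exact div_pos (Real.rpow_pos_of_pos Real.pi_pos _) hΓ
  set μ : Measure (EuclideanSpace ℝ (Fin d)) := volume.restrict X with hμdef
  haveI : IsProbabilityMeasure μ := ⟨by rw [Measure.restrict_apply_univ]; exact hXvol⟩
  apply polya_unif
  · -- monotone
    intro n t1 t2 h12
    exact ENNReal.toReal_mono (measure_ne_top P _)
      (measure_mono fun ω hω => le_trans hω h12)
  · -- bounded by 1
    intro n t
    have h1 := prob_le_one (μ := P)
      (s := {ω | (n : ℝ) ^ ((1 : ℝ) / d) * Vd ^ ((1 : ℝ) / d) *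
            (⨅ j : Fin n, dist (z 0 ω) (z ((j : ℕ) + 1) ω)) ≤ t})
    have := ENNReal.toReal_mono ENNReal.one_ne_top h1
    simpa using this
  · -- continuity of the limit
    exact continuous_const.sub (Real.continuous_exp.comp (continuous_pow d).neg)
  · -- monotone on Ici 0
    intro x hx y hy hxy
    have : x ^ d ≤ y ^ d := pow_le_pow_left₀ hx hxy d
    have := Real.exp_le_exp.mpr (neg_le_neg this)
    simp only
    linarith
  · -- tendsto 1 at top
    have h1 : Tendsto (fun t : ℝ => t ^ d) atTop atTop := tendsto_pow_atTop hd.ne'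
    have h2 : Tendsto (fun t : ℝ => -(t ^ d)) atTop atBot := tendsto_neg_atBot_iff.mpr h1
    have h3 : Tendsto (fun t : ℝ => Real.exp (-(t ^ d))) atTop (nhds 0) :=
      Real.tendsto_exp_atBot.comp h2
    have := tendsto_const_nhds (α := ℝ) (x := (1:ℝ)) (f := atTop) |>.sub h3
    simpa using this
  · -- pointwise convergence
    intro t ht
    set a : ℝ := t ^ d with hadef
    have ha : 0 ≤ a := by positivity
    set c : ℕ → ℝ := fun n => (n:ℝ) ^ ((1:ℝ)/d) * Vd ^ ((1:ℝ)/d) with hcdef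
    have hcpos : ∀ n : ℕ, 1 ≤ n → 0 < c n := by
      intro n hn
      have : (0:ℝ) < n := by exact_mod_cast hn
      exact mul_pos (Real.rpow_pos_of_pos this _) (Real.rpow_pos_of_pos hVdpos _)
    set r : ℕ → ℝ := fun n => t / c n with hrdef
    have hr0 : ∀ n : ℕ, 1 ≤ n → 0 ≤ r n := fun n hn => div_nonneg ht (hcpos n hn).le
    have hctop : Tendsto c atTop atTop := by
      have h1 : Tendsto (fun n : ℕ => (n:ℝ) ^ ((1:ℝ)/d)) atTop atTop :=
        (tendsto_rpow_atTop (by positivity)).comp tendsto_natCast_atTop_atTop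
      exact h1.atTop_mul_const (Real.rpow_pos_of_pos hVdpos _)
    have hr : Tendsto r atTop (nhds 0) := tendsto_const_nhds.div_atTop hctop
    -- the d-th power of c n is n * Vd
    have hcd : ∀ n : ℕ, 1 ≤ n → (c n) ^ d = n * Vd := by
      intro n hn
      have hnn : (0:ℝ) ≤ n := Nat.cast_nonneg n
      rw [hcdef]
      rw [mul_pow, ← Real.rpow_natCast ((n:ℝ) ^ ((1:ℝ)/d)) d,
        ← Real.rpow_natCast (Vd ^ ((1:ℝ)/d)) d,
        ← Real.rpow_mul hnn, ← Real.rpow_mul hVdpos.le]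
      have hdd : (1:ℝ)/d * d = 1 := by field_simp
      rw [hdd, Real.rpow_one, Real.rpow_one]
    -- volume identity
    have hvol : ∀ n : ℕ, 1 ≤ n → ∀ u : EuclideanSpace ℝ (Fin d),
        volume (Metric.closedBall u (r n)) = ENNReal.ofReal (a / n) := by
      intro n hn u
      rw [EuclideanSpace.volume_closedBall]
      simp only [Fintype.card_fin]
      have hsqrt : Real.sqrt Real.pi ^ d = Real.pi ^ ((d:ℝ)/2) := by
        rw [Real.sqrt_eq_rpow, ← Real.rpow_natCast (Real.pi ^ ((1:ℝ)/2)) d,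
          ← Real.rpow_mul Real.pi_pos.le]
        congr 1
        ring
      have hVd' : Real.sqrt Real.pi ^ d / Real.Gamma ((d:ℝ)/2 + 1) = Vd := by
        rw [hsqrt, hVd]
      rw [← ENNReal.ofReal_pow (hr0 n hn), ← ENNReal.ofReal_mul (by positivity)]
      congr 1
      rw [hVd']
      have hcne : c n ≠ 0 := (hcpos n hn).ne'
      have hnne : (n:ℝ) ≠ 0 := by
        have : (0:ℝ) < n := by exact_mod_cast hn
        exact this.ne'
      have : r n ^ d = t ^ d / (n * Vd) := by
        rw [hrdef]
        rw [div_pow, hcd n hn]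
      rw [this, hadef]
      field_simp
    -- the lintegral limit
    have hI := lintegral_limit hXconv hXvol ha hr hvol
    -- identify F n t with the formula, eventually
    set I : ℕ → ℝ≥0∞ := fun n => ∫⁻ u, (1 - μ (Metric.closedBall u (r n)))^n ∂μ with hIdef
    have hIle : ∀ n, I n ≤ 1 := by
      intro n
      calc I n ≤ ∫⁻ _u, 1 ∂μ := lintegral_mono fun u => pow_le_one' tsub_le_self n
      _ = 1 := by rw [lintegral_one, measure_univ]
    have hIto : Tendsto (fun n => (I n).toReal) atTop (nhds (Real.exp (-a))) := by
      have h2 := (ENNReal.tendsto_toReal (ENNReal.ofReal_ne_top)).comp hI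
      rwa [ENNReal.toReal_ofReal (Real.exp_nonneg _)] at h2
    have hfinal : Tendsto (fun n => 1 - (I n).toReal) atTop (nhds (1 - Real.exp (-(t^d)))) := by
      rw [← hadef]
      exact (tendsto_const_nhds (x := (1:ℝ))).sub hIto
    refine hfinal.congr' ?_
    filter_upwards [eventually_ge_atTop 1] with n hn
    have hevent : {ω | (n : ℝ) ^ ((1 : ℝ) / d) * Vd ^ ((1 : ℝ) / d) *
            (⨅ j : Fin n, dist (z 0 ω) (z ((j : ℕ) + 1) ω)) ≤ t}
        = {ω | (⨅ j : Fin n, dist (z 0 ω) (z ((j : ℕ) + 1) ω)) ≤ r n} := by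
      ext ω
      simp only [Set.mem_setOf_eq]
      rw [hrdef]
      exact (le_div_iff₀' (hcpos n hn)).symm
    have hform := joint_formula P z hmeas hindep μ hlaw n hn (r n)
    rw [hevent, hform, ENNReal.toReal_sub_of_le (hIle n) ENNReal.one_ne_top, ENNReal.toReal_one]
end

section
/- Let U and X̃ be independent random vectors, each uniformly distributed on [0,1]^d, let r > 0 and n ≥ 1. Then E_U[ 1 − (1 − Pr_{X̃}{ ‖U − X̃‖ ≤ r | U })^n ] ≤ 1 − (1 − Pr_{X̃}{ ‖𝟙/2 − X̃‖ ≤ r })^n, where 𝟙/2 = (1/2, …, 1/2) is the center of the cube. -/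
open MeasureTheory Metric
open scoped ENNReal

namespace JensenAux

/-- 1D: an interval of fixed (half-)length intersected with `[0,1]` has maximal
length when centered at `1/2`. -/
lemma oneD (u : ℝ) (s : ℝ) (hu : u ∈ Set.Icc (0:ℝ) 1) :
    volume {x : ℝ | x ∈ Set.Icc (0:ℝ) 1 ∧ (x - u)^2 ≤ s} ≤
    volume {x : ℝ | x ∈ Set.Icc (0:ℝ) 1 ∧ (x - 1/2)^2 ≤ s} := by
  rcases lt_or_ge s 0 with hs | hs
  · have h0 : {x : ℝ | x ∈ Set.Icc (0:ℝ) 1 ∧ (x - u)^2 ≤ s} = ∅ := by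
      ext x
      simp only [Set.mem_setOf_eq, Set.mem_empty_iff_false, iff_false, not_and]
      intro _ h
      nlinarith [sq_nonneg (x - u)]
    rw [h0]
    simp
  · set t := Real.sqrt s with ht
    have ht0 : 0 ≤ t := Real.sqrt_nonneg s
    have hts : t ^ 2 = s := Real.sq_sqrt hs
    have hiff : ∀ v x : ℝ, ((x - v)^2 ≤ s ↔ v - t ≤ x ∧ x ≤ v + t) := by
      intro v x
      constructor
      · intro h
        constructor <;> nlinarith
      · rintro ⟨h1, h2⟩
        nlinarith
    have hset : ∀ v : ℝ, {x : ℝ | x ∈ Set.Icc (0:ℝ) 1 ∧ (x - v)^2 ≤ s}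
        = Set.Icc (max 0 (v - t)) (min 1 (v + t)) := by
      intro v
      ext x
      simp only [Set.mem_setOf_eq, Set.mem_Icc, hiff v x, max_le_iff, le_min_iff]
      tauto
    rw [hset u, hset (1/2), Real.volume_Icc, Real.volume_Icc]
    apply ENNReal.ofReal_le_ofReal
    rcases le_total t (1/2) with h | h
    · have h1 : min 1 ((1:ℝ)/2 + t) = 1/2 + t := min_eq_right (by linarith)
      have h2 : max 0 ((1:ℝ)/2 - t) = 1/2 - t := max_eq_right (by linarith)
      have h3 := min_le_right (1:ℝ) (u + t)
      have h4 := le_max_right (0:ℝ) (u - t)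
      rw [h1, h2]; linarith
    · have h1 : min 1 ((1:ℝ)/2 + t) = 1 := min_eq_left (by linarith)
      have h2 : max 0 ((1:ℝ)/2 - t) = 0 := max_eq_left (by linarith)
      have h3 := min_le_left (1:ℝ) (u + t)
      have h4 := le_max_left (0:ℝ) (u - t)
      rw [h1, h2]; linarith

lemma measSet {m : ℕ} (r2 : ℝ) (u : Fin m → ℝ) :
    MeasurableSet {x : Fin m → ℝ | (∀ i, x i ∈ Set.Icc (0:ℝ) 1) ∧ ∑ i, (x i - u i)^2 ≤ r2} := by
  have h1 : MeasurableSet {x : Fin m → ℝ | ∀ i, x i ∈ Set.Icc (0:ℝ) 1} := by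
    rw [Set.setOf_forall]
    exact MeasurableSet.iInter fun i => (measurable_pi_apply i) measurableSet_Icc
  have h2 : MeasurableSet {x : Fin m → ℝ | ∑ i, (x i - u i)^2 ≤ r2} := by
    apply measurableSet_le _ measurable_const
    exact Finset.measurable_sum _ fun i _ => ((measurable_pi_apply i).sub measurable_const).pow_const 2
  exact (Set.setOf_and ▸ h1.inter h2 : _)

lemma swap {m : ℕ} (r2 : ℝ) (u : Fin (m+1) → ℝ) (hu : ∀ i, u i ∈ Set.Icc (0:ℝ) 1)
    (j : Fin (m+1)) :
    volume {x : Fin (m+1) → ℝ | (∀ i, x i ∈ Set.Icc (0:ℝ) 1) ∧ ∑ i, (x i - u i)^2 ≤ r2} ≤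
    volume {x : Fin (m+1) → ℝ | (∀ i, x i ∈ Set.Icc (0:ℝ) 1) ∧
      ∑ i, (x i - Function.update u j (1/2) i)^2 ≤ r2} := by
  classical
  set e := MeasurableEquiv.piFinSuccAbove (fun _ : Fin (m+1) => ℝ) j with he
  have hmp := (volume_preserving_piFinSuccAbove (fun _ : Fin (m+1) => ℝ) j).symm
  rw [← hmp.measure_preimage (measSet r2 u).nullMeasurableSet,
      ← hmp.measure_preimage (measSet r2 (Function.update u j (1/2))).nullMeasurableSet]
  rw [Measure.volume_eq_prod]
  rw [Measure.prod_apply_symm (e.symm.measurable (measSet r2 u)),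
      Measure.prod_apply_symm (e.symm.measurable (measSet r2 (Function.update u j (1/2))))]
  refine lintegral_mono fun y => ?_
  by_cases hy : ∀ i, y i ∈ Set.Icc (0:ℝ) 1
  · have hset : ∀ v : Fin (m+1) → ℝ,
        ((fun t : ℝ => (t, y)) ⁻¹' (e.symm ⁻¹'
          {x : Fin (m+1) → ℝ | (∀ i, x i ∈ Set.Icc (0:ℝ) 1) ∧ ∑ i, (x i - v i)^2 ≤ r2}))
        = {t : ℝ | t ∈ Set.Icc (0:ℝ) 1 ∧
            (t - v j)^2 ≤ r2 - ∑ i, (y i - v (j.succAbove i))^2} := by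
      intro v
      ext t
      simp only [Set.mem_preimage, Set.mem_setOf_eq, he,
        MeasurableEquiv.piFinSuccAbove_symm_apply, Fin.insertNthEquiv_apply]
      rw [Fin.forall_iff_succAbove j, Fin.sum_univ_succAbove _ j]
      simp only [Fin.insertNth_apply_same, Fin.insertNth_apply_succAbove]
      constructor
      · rintro ⟨⟨h1, _⟩, h3⟩
        exact ⟨h1, by linarith⟩
      · rintro ⟨h1, h2⟩
        exact ⟨⟨h1, hy⟩, by linarith⟩
    rw [hset u, hset (Function.update u j (1/2))]
    have hc : ∑ i, (y i - Function.update u j (1/2) (j.succAbove i))^2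
        = ∑ i, (y i - u (j.succAbove i))^2 := by
      refine Finset.sum_congr rfl fun i _ => ?_
      rw [Function.update_of_ne (Fin.succAbove_ne j i)]
    rw [hc, Function.update_self]
    exact oneD (u j) _ (hu j)
  · have hset0 : ∀ v : Fin (m+1) → ℝ,
        ((fun t : ℝ => (t, y)) ⁻¹' (e.symm ⁻¹'
          {x : Fin (m+1) → ℝ | (∀ i, x i ∈ Set.Icc (0:ℝ) 1) ∧ ∑ i, (x i - v i)^2 ≤ r2})) = ∅ := by
      intro v
      ext t
      simp only [Set.mem_preimage, Set.mem_setOf_eq, he,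
        MeasurableEquiv.piFinSuccAbove_symm_apply, Fin.insertNthEquiv_apply,
        Set.mem_empty_iff_false, iff_false, not_and]
      intro h1 _
      exact (hy fun i => by simpa [Fin.insertNth_apply_succAbove] using h1 (j.succAbove i)) |>.elim
    rw [hset0 u, hset0 (Function.update u j (1/2))]

lemma center {m : ℕ} (r2 : ℝ) (u : Fin (m+1) → ℝ) (hu : ∀ i, u i ∈ Set.Icc (0:ℝ) 1) :
    volume {x : Fin (m+1) → ℝ | (∀ i, x i ∈ Set.Icc (0:ℝ) 1) ∧ ∑ i, (x i - u i)^2 ≤ r2} ≤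
    volume {x : Fin (m+1) → ℝ | (∀ i, x i ∈ Set.Icc (0:ℝ) 1) ∧ ∑ i, (x i - 1/2)^2 ≤ r2} := by
  classical
  have key : ∀ T : Finset (Fin (m+1)),
      volume {x : Fin (m+1) → ℝ | (∀ i, x i ∈ Set.Icc (0:ℝ) 1) ∧ ∑ i, (x i - u i)^2 ≤ r2} ≤
      volume {x : Fin (m+1) → ℝ | (∀ i, x i ∈ Set.Icc (0:ℝ) 1) ∧
        ∑ i, (x i - (if i ∈ T then 1/2 else u i))^2 ≤ r2} := by
    intro T
    induction T using Finset.induction with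
    | empty => simp
    | @insert j T hj ih =>
      refine ih.trans ?_
      have hEq : (fun i => if i ∈ insert j T then (1:ℝ)/2 else u i)
          = Function.update (fun i => if i ∈ T then (1:ℝ)/2 else u i) j (1/2) := by
        funext i
        by_cases h : i = j
        · subst h; simp [hj]
        · simp [Function.update_of_ne h, h]
      have hu' : ∀ i, (if i ∈ T then (1:ℝ)/2 else u i) ∈ Set.Icc (0:ℝ) 1 := by
        intro i
        by_cases h : i ∈ T
        · simp [h]; norm_num
        · simpa [h] using hu i
      have := swap r2 (fun i => if i ∈ T then (1:ℝ)/2 else u i) hu' j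
      simp only [← hEq] at this
      exact this
  have := key Finset.univ
  simpa using this

end JensenAux

/-- **First Jensen bound (eq. Jensen_naive).** Let
`g u = vol(B(u,r) ∩ [0,1]^d)`. Then
`E_U[1 - (1 - g U)^n] ≤ 1 - (1 - g(1/2,…,1/2))^n` for `U` uniform on the
cube. -/
theorem jensen_bound_center
    {d : ℕ} (hd : 0 < d) (r : ℝ) (hr : 0 < r) (n : ℕ) (hn : 1 ≤ n)
    (cube : Set (EuclideanSpace ℝ (Fin d)))
    (hcube : cube = {u : EuclideanSpace ℝ (Fin d) | ∀ i, u i ∈ Set.Icc (0 : ℝ) 1})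
    (g : EuclideanSpace ℝ (Fin d) → ℝ≥0∞)
    (hg : ∀ u, g u = volume (closedBall u r ∩ cube))
    (c : EuclideanSpace ℝ (Fin d)) (hc : ∀ i, c i = 1 / 2) :
    ∫⁻ u in cube, (1 - (1 - g u) ^ n) ∂volume ≤ 1 - (1 - g c) ^ n := by
  obtain ⟨m, rfl⟩ : ∃ m, d = m + 1 := ⟨d - 1, by omega⟩
  have hcubeMeas : MeasurableSet cube := by
    rw [hcube, Set.setOf_forall]
    exact MeasurableSet.iInter fun i =>
      ((measurable_pi_apply (X := fun _ : Fin (m+1) => ℝ) i).comp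
        (MeasurableEquiv.toLp 2 (Fin (m+1) → ℝ)).symm.measurable) measurableSet_Icc
  have hvol : ∀ A : Set (EuclideanSpace ℝ (Fin (m+1))), MeasurableSet A →
      volume A = volume ((MeasurableEquiv.toLp 2 (Fin (m+1) → ℝ)) ⁻¹' A) := fun A hA =>
    (((EuclideanSpace.volume_preserving_symm_measurableEquiv_toLp (Fin (m+1))).symm _).measure_preimage
      hA.nullMeasurableSet).symm
  have hpull : ∀ v : EuclideanSpace ℝ (Fin (m+1)),
      (MeasurableEquiv.toLp 2 (Fin (m+1) → ℝ)) ⁻¹' (closedBall v r ∩ cube)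
      = {x : Fin (m+1) → ℝ | (∀ i, x i ∈ Set.Icc (0:ℝ) 1) ∧ ∑ i, (x i - v i)^2 ≤ r^2} := by
    intro v
    rw [hcube]
    ext x
    have hco : ∀ i, ((MeasurableEquiv.toLp 2 (Fin (m+1) → ℝ)) x) i = x i := fun i => rfl
    simp only [Set.mem_preimage, Set.mem_inter_iff, mem_closedBall, Set.mem_setOf_eq,
      EuclideanSpace.dist_eq, Real.dist_eq, hco]
    have hnn : 0 ≤ ∑ i, |x i - v i| ^ 2 := Finset.sum_nonneg fun i _ => sq_nonneg _
    have habs : ∑ i, |x i - v i| ^ 2 = ∑ i, (x i - v i)^2 :=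
      Finset.sum_congr rfl fun i _ => sq_abs _
    constructor
    · rintro ⟨h1, h2⟩
      refine ⟨h2, ?_⟩
      rw [← habs]
      have := pow_le_pow_left₀ (Real.sqrt_nonneg _) h1 2
      rwa [Real.sq_sqrt hnn] at this
    · rintro ⟨h1, h2⟩
      refine ⟨?_, h1⟩
      calc Real.sqrt (∑ i, |x i - v i|^2) ≤ Real.sqrt (r^2) :=
            Real.sqrt_le_sqrt (by rw [habs]; exact h2)
        _ = r := Real.sqrt_sq hr.le
  have hcmem : ∀ i, c i ∈ Set.Icc (0:ℝ) 1 := fun i => by rw [hc i]; norm_num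
  have hgle : ∀ u0 : EuclideanSpace ℝ (Fin (m+1)), (∀ i, u0 i ∈ Set.Icc (0:ℝ) 1) →
      g u0 ≤ g c := by
    intro u0 hu0
    rw [hg u0, hg c, hvol _ (measurableSet_closedBall.inter hcubeMeas),
      hvol _ (measurableSet_closedBall.inter hcubeMeas), hpull u0, hpull c]
    simp only [hc]
    exact JensenAux.center (r^2) (fun i => u0 i) hu0
  have hcube1 : volume cube = 1 := by
    rw [hvol _ hcubeMeas]
    have : (MeasurableEquiv.toLp 2 (Fin (m+1) → ℝ)) ⁻¹' cube
        = Set.pi Set.univ (fun _ : Fin (m+1) => Set.Icc (0:ℝ) 1) := by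
      rw [hcube]
      ext x
      have hco : ∀ i, ((MeasurableEquiv.toLp 2 (Fin (m+1) → ℝ)) x) i = x i :=
        fun i => rfl
      simp only [Set.mem_preimage, Set.mem_setOf_eq, Set.mem_univ_pi, hco]
    rw [this, volume_pi_pi]
    simp [Real.volume_Icc]
  have hpt : ∀ u0 ∈ cube, 1 - (1 - g u0) ^ n ≤ 1 - (1 - g c) ^ n := by
    intro u0 hu0
    have hmem : ∀ i, u0 i ∈ Set.Icc (0:ℝ) 1 := by
      rw [hcube] at hu0; exact hu0
    have h1 : (1 : ℝ≥0∞) - g c ≤ 1 - g u0 := tsub_le_tsub_left (hgle u0 hmem) 1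
    exact tsub_le_tsub_left (pow_le_pow_left' h1 n) 1
  calc ∫⁻ u in cube, (1 - (1 - g u) ^ n) ∂volume
      ≤ ∫⁻ _ in cube, (1 - (1 - g c) ^ n) ∂volume :=
        setLIntegral_mono measurable_const hpt
    _ = (1 - (1 - g c) ^ n) * volume cube := setLIntegral_const cube _
    _ = 1 - (1 - g c) ^ n := by rw [hcube1, mul_one]
end

section
/- Let U and X̃ be independent random vectors, each uniformly distributed on [0,1]^d, let r > 0 and n ≥ 1. Then E_U[ 1 − (1 − Pr_{X̃}{ ‖U − X̃‖ ≤ r | U })^n ] ≤ 1 − (1 − Pr_{X̃}{ ‖𝟛/4 − X̃‖ ≤ r })^n, where 𝟛/4 = (3/4, …, 3/4). -/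
open MeasureTheory Metric
open scoped ENNReal

open Set

noncomputable def JBlam : Measure ℝ := volume.restrict (Icc 0 1)

instance : IsProbabilityMeasure JBlam :=
  ⟨by simp [JBlam, Real.volume_Icc]⟩

lemma JBsq_le (s : ℝ) (hs : 0 ≤ s) (x : ℝ) : x^2 ≤ s ↔ |x| ≤ Real.sqrt s := by
  constructor
  · intro h
    by_contra hc; push_neg at hc
    nlinarith [Real.sq_sqrt hs, sq_abs x, Real.sqrt_nonneg s]
  · intro h
    nlinarith [Real.sq_sqrt hs, sq_abs x, abs_nonneg x]

lemma JBset_Icc (u : ℝ) (s : ℝ) (hs : 0 ≤ s) :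
    {b : ℝ | (u - b)^2 ≤ s} = Icc (u - Real.sqrt s) (u + Real.sqrt s) := by
  ext b
  simp only [mem_setOf_eq, mem_Icc, JBsq_le s hs, abs_le]
  constructor <;> (rintro ⟨h1, h2⟩; constructor <;> linarith)

lemma JBlam_Icc (a b : ℝ) :
    JBlam (Icc a b) = ENNReal.ofReal (min b 1 - max a 0) := by
  rw [JBlam, Measure.restrict_apply measurableSet_Icc, Icc_inter_Icc, Real.volume_Icc]

lemma JBA (s : ℝ) :
    (JBlam.prod JBlam) {p : ℝ × ℝ | (p.1 - p.2)^2 ≤ s} ≤ JBlam {b | (3/4 - b)^2 ≤ s} := by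
  rcases lt_or_ge s 0 with hs | hs
  · have h0 : {p : ℝ × ℝ | (p.1 - p.2)^2 ≤ s} = ∅ := by
      ext p; simp only [mem_setOf_eq, mem_empty_iff_false, iff_false, not_le]
      exact lt_of_lt_of_le hs (sq_nonneg _)
    simp [h0]
  set w := Real.sqrt s with hw_def
  have hw : 0 ≤ w := Real.sqrt_nonneg s
  have hRHS : JBlam {b | (3/4 - b)^2 ≤ s}
      = ENNReal.ofReal (min (3/4 + w) 1 - max (3/4 - w) 0) := by
    rw [JBset_Icc (3/4) s hs, JBlam_Icc]
  rcases le_or_gt (3/4) w with hw34 | hw34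
  · -- RHS is everything
    have : min (3/4 + w) 1 - max (3/4 - w) 0 = (1:ℝ) := by
      rw [min_eq_right (by linarith), max_eq_right (by linarith)]; ring
    rw [hRHS, this]
    simpa using prob_le_one (μ := JBlam.prod JBlam) (s := _)
  · -- main case : w < 3/4
    have hw1 : w ≤ 1 := by linarith
    have hmeas : MeasurableSet {p : ℝ × ℝ | (p.1 - p.2)^2 ≤ s} :=
      measurableSet_le (by fun_prop) measurable_const
    rw [Measure.prod_apply hmeas]
    have hsection : ∀ a : ℝ, JBlam (Prod.mk a ⁻¹' {p : ℝ × ℝ | (p.1 - p.2)^2 ≤ s})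
        = ENNReal.ofReal (min (a + w) 1 - max (a - w) 0) := by
      intro a
      have : Prod.mk a ⁻¹' {p : ℝ × ℝ | (p.1 - p.2)^2 ≤ s} = Icc (a - w) (a + w) := by
        rw [← JBset_Icc a s hs]; rfl
      rw [this, JBlam_Icc]
    simp_rw [hsection]
    -- turn the lintegral into a real integral
    set fR : ℝ → ℝ := fun a => min (a + w) 1 - max (a - w) 0 with hfR
    have hcont : Continuous fR := by
      apply Continuous.sub
      · exact (continuous_id.add continuous_const).min continuous_const
      · exact (continuous_id.sub continuous_const).max continuous_const
    have hint : Integrable fR JBlam := by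
      rw [JBlam]
      exact hcont.integrableOn_Icc.integrable
    have hnn : 0 ≤ᵐ[JBlam] fR := by
      rw [JBlam]
      refine (ae_restrict_iff' measurableSet_Icc).mpr (Filter.Eventually.of_forall ?_)
      rintro a ⟨ha0, ha1⟩
      have : max (a - w) 0 ≤ min (a + w) 1 := by
        apply max_le <;> apply le_min <;> linarith
      simpa [fR, sub_nonneg] using this
    have hlin : ∫⁻ a, ENNReal.ofReal (fR a) ∂JBlam = ENNReal.ofReal (∫ a, fR a ∂JBlam) :=
      (ofReal_integral_eq_lintegral_ofReal hint hnn).symm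
    rw [hlin]
    -- compute the real integral
    have hI : ∫ a, fR a ∂JBlam = 2*w - w^2 := by
      rw [JBlam, integral_Icc_eq_integral_Ioc,
        ← intervalIntegral.integral_of_le (by norm_num : (0:ℝ) ≤ 1)]
      have heq : EqOn fR (fun a => min w (1-a) + min a w) (uIcc 0 1) := by
        intro a _
        simp only [fR]
        rcases le_total (a + w) 1 with h | h <;> rcases le_total (a - w) 0 with h' | h' <;>
          rcases le_total a w with h'' | h'' <;>
          simp [min_def, max_def, h, h', h''] <;> grind
      rw [intervalIntegral.integral_congr heq]
      have c1 : Continuous (fun a : ℝ => min w (1-a)) :=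
        continuous_const.min (continuous_const.sub continuous_id)
      have c2 : Continuous (fun a : ℝ => min a w) :=
        continuous_id.min continuous_const
      rw [intervalIntegral.integral_add (c1.intervalIntegrable 0 1) (c2.intervalIntegrable 0 1)]
      have h1w : (0:ℝ) ≤ 1 - w := by linarith
      have hJ1 : ∫ a in (0:ℝ)..1, min w (1-a) = w - w^2/2 := by
        rw [← intervalIntegral.integral_add_adjacent_intervals
          (c1.intervalIntegrable 0 (1-w)) (c1.intervalIntegrable (1-w) 1)]
        have e1 : ∫ a in (0:ℝ)..(1-w), min w (1-a) = (1-w) * w := by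
          rw [intervalIntegral.integral_congr (g := fun _ => w)
            (fun a ha => by
              rw [uIcc_of_le h1w] at ha
              exact min_eq_left (by linarith [ha.2])),
            intervalIntegral.integral_const]
          simp [smul_eq_mul]
        have e2 : ∫ a in (1-w:ℝ)..1, min w (1-a) = w^2/2 := by
          rw [intervalIntegral.integral_congr (g := fun a => 1 - a)
            (fun a ha => by
              rw [uIcc_of_le (by linarith : (1-w:ℝ) ≤ 1)] at ha
              exact min_eq_right (by linarith [ha.1])),
            intervalIntegral.integral_sub (intervalIntegrable_const)
              intervalIntegral.intervalIntegrable_id,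
            intervalIntegral.integral_const, integral_id]
          simp [smul_eq_mul]; ring
        rw [e1, e2]; ring
      have hJ2 : ∫ a in (0:ℝ)..1, min a w = w - w^2/2 := by
        rw [← intervalIntegral.integral_add_adjacent_intervals
          (c2.intervalIntegrable 0 w) (c2.intervalIntegrable w 1)]
        have e1 : ∫ a in (0:ℝ)..w, min a w = w^2/2 := by
          rw [intervalIntegral.integral_congr (g := fun a => a)
            (fun a ha => by
              rw [uIcc_of_le hw] at ha
              exact min_eq_left ha.2),
            integral_id]
          ring
        have e2 : ∫ a in (w:ℝ)..1, min a w = (1 - w) * w := by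
          rw [intervalIntegral.integral_congr (g := fun _ => w)
            (fun a ha => by
              rw [uIcc_of_le hw1] at ha
              exact min_eq_right ha.1),
            intervalIntegral.integral_const]
          simp [smul_eq_mul]
        rw [e1, e2]; ring
      rw [hJ1, hJ2]; ring
    rw [hI, hRHS]
    apply ENNReal.ofReal_le_ofReal
    rcases le_total w (1/4) with h | h
    · rw [min_eq_left (by linarith), max_eq_left (by linarith)]; nlinarith
    · rw [min_eq_right (by linarith), max_eq_left (by linarith)]; nlinarith [sq_nonneg (w - 1/2)]

lemma JB_lower {α β : Type*} [MeasurableSpace α] [MeasurableSpace β]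
    (μ : Measure α) (ν : Measure β) [IsProbabilityMeasure μ] [IsProbabilityMeasure ν]
    {f : α → ℝ} {g : β → ℝ}
    (hdom : ∀ t : ℝ, μ {a | f a ≤ t} ≤ ν {b | g b ≤ t})
    {S : Set ℝ} (hS : IsLowerSet S) :
    μ (f ⁻¹' S) ≤ ν (g ⁻¹' S) := by
  rcases S.eq_empty_or_nonempty with h | ⟨z0, hz0⟩
  · simp [h]
  by_cases huniv : S = univ
  · simp [huniv]
  · obtain ⟨z, hz⟩ : ∃ z, z ∉ S := by
      by_contra h; push_neg at h; exact huniv (eq_univ_of_forall h)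
    have hbdd : BddAbove S := by
      refine ⟨z, fun s hs => ?_⟩
      by_contra hc; push_neg at hc
      exact hz (hS hc.le hs)
    set c := sSup S with hc
    have hsub : S ⊆ Iic c := fun s hs => le_csSup hbdd hs
    have hsup : Iio c ⊆ S := by
      intro y hy
      obtain ⟨s, hsS, hys⟩ := exists_lt_of_lt_csSup ⟨z0, hz0⟩ hy
      exact hS hys.le hsS
    by_cases hcS : c ∈ S
    · have : S = Iic c := Subset.antisymm hsub (fun y hy => hS hy hcS)
      rw [this]
      exact hdom c
    · have hSeq : S = Iio c := by
        refine Subset.antisymm (fun s hs => ?_) hsup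
        rcases lt_or_eq_of_le (mem_Iic.mp (hsub hs)) with h | h
        · exact h
        · exact absurd (h ▸ hs) hcS
      rw [hSeq]
      have hIio : Iio c = ⋃ n : ℕ, Iic (c - 1/(n+1)) := by
        ext y
        simp only [mem_Iio, mem_iUnion, mem_Iic]
        constructor
        · intro hy
          obtain ⟨n, hn⟩ := exists_nat_one_div_lt (sub_pos.mpr hy)
          exact ⟨n, by linarith⟩
        · rintro ⟨n, hn⟩
          have : (0:ℝ) < 1/(n+1) := by positivity
          linarith
      have hmono : Monotone (fun n : ℕ => Iic (c - 1/(n+1) : ℝ)) := by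
        intro n m hnm y hy
        simp only [mem_Iic] at *
        have h1 : (1:ℝ)/(m+1) ≤ 1/(n+1) := by
          apply one_div_le_one_div_of_le <;> [positivity; exact_mod_cast by omega]
        linarith
      have hdom' : ∀ t : ℝ, μ (f ⁻¹' Iic t) ≤ ν (g ⁻¹' Iic t) := fun t => hdom t
      have hmf : Monotone fun n : ℕ => f ⁻¹' Iic (c - 1/(n+1)) :=
        fun n m h => preimage_mono (hmono h)
      have hmg : Monotone fun n : ℕ => g ⁻¹' Iic (c - 1/(n+1)) :=
        fun n m h => preimage_mono (hmono h)
      rw [hIio, preimage_iUnion, preimage_iUnion,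
        Directed.measure_iUnion hmf.directed_le, Directed.measure_iUnion hmg.directed_le]
      exact iSup_mono fun n => hdom' _

lemma JBB {α β : Type*} [MeasurableSpace α] [MeasurableSpace β]
    (μ : Measure α) (ν : Measure β) [IsProbabilityMeasure μ] [IsProbabilityMeasure ν]
    {f : α → ℝ} {g : β → ℝ} (hf : Measurable f) (hg : Measurable g)
    (hdom : ∀ t : ℝ, μ {a | f a ≤ t} ≤ ν {b | g b ≤ t})
    {H : ℝ → ℝ≥0∞} (hH : Antitone H) (hH1 : ∀ s, H s ≤ 1) :
    ∫⁻ a, H (f a) ∂μ ≤ ∫⁻ b, H (g b) ∂ν := by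
  set Hr : ℝ → ℝ := fun s => (H s).toReal with hHr
  have hfin : ∀ s, H s ≠ ∞ := fun s => (lt_of_le_of_lt (hH1 s) (by norm_num)).ne
  have hofReal : ∀ s, H s = ENNReal.ofReal (Hr s) := fun s =>
    (ENNReal.ofReal_toReal (hfin s)).symm
  have hHrA : Antitone Hr := fun s s' hss' =>
    ENNReal.toReal_mono (hfin s) (hH hss')
  have hHrM : Measurable Hr := hHrA.measurable
  have key : ∀ t : ℝ, μ {a | t < Hr (f a)} ≤ ν {b | t < Hr (g b)} := by
    intro t
    have : IsLowerSet {s : ℝ | t < Hr s} := fun s s' hss' hs =>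
      lt_of_lt_of_le hs (hHrA hss')
    exact JB_lower μ ν hdom this
  calc ∫⁻ a, H (f a) ∂μ = ∫⁻ a, ENNReal.ofReal (Hr (f a)) ∂μ := by
        simp_rw [← hofReal]
    _ = ∫⁻ t in Ioi (0:ℝ), μ {a | t < Hr (f a)} := by
        exact lintegral_eq_lintegral_meas_lt μ
          (Filter.Eventually.of_forall fun a => ENNReal.toReal_nonneg)
          ((hHrM.comp hf).aemeasurable)
    _ ≤ ∫⁻ t in Ioi (0:ℝ), ν {b | t < Hr (g b)} :=
        lintegral_mono fun t => key t
    _ = ∫⁻ b, ENNReal.ofReal (Hr (g b)) ∂ν := by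
        rw [← lintegral_eq_lintegral_meas_lt ν
          (Filter.Eventually.of_forall fun b => ENNReal.toReal_nonneg)
          ((hHrM.comp hg).aemeasurable)]
    _ = ∫⁻ b, H (g b) ∂ν := by simp_rw [← hofReal]

noncomputable def JBLam (d : ℕ) : Measure (Fin d → ℝ) := Measure.pi fun _ => JBlam
instance (d : ℕ) : IsProbabilityMeasure (JBLam d) := by unfold JBLam; infer_instance
instance (d : ℕ) : SFinite (JBLam d) := by infer_instance

lemma JBkey : ∀ (d : ℕ) (t : ℝ),
    ∫⁻ u, JBLam d {x | ∑ i, (u i - x i)^2 ≤ t} ∂(JBLam d)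
      ≤ JBLam d {x | ∑ i, ((3:ℝ)/4 - x i)^2 ≤ t} := by
  intro d
  induction d with
  | zero =>
    intro t
    by_cases ht : (0:ℝ) ≤ t
    · simp [ht]
    · simp [ht]
  | succ d ih =>
    intro t
    set e := MeasurableEquiv.piFinSuccAbove (fun _ : Fin (d+1) => ℝ) 0 with he
    have hmp : MeasurePreserving e (JBLam (d+1)) (JBlam.prod (JBLam d)) :=
      measurePreserving_piFinSuccAbove (fun _ => JBlam) 0
    have hmap : JBLam (d+1) = (JBlam.prod (JBLam d)).map e.symm :=
      ((MeasurePreserving.symm e hmp).map_eq).symm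
    -- coordinates of e.symm
    have h0 : ∀ (b : ℝ) (v : Fin d → ℝ), e.symm (b, v) 0 = b := by
      intro b v
      simp [he, MeasurableEquiv.piFinSuccAbove_symm_apply, Fin.insertNth_apply_same]
    have hsucc : ∀ (b : ℝ) (v : Fin d → ℝ) (j : Fin d),
        e.symm (b, v) (Fin.succ j) = v j := by
      intro b v j
      have : Fin.succ j = (0 : Fin (d+1)).succAbove j := by
        rw [Fin.zero_succAbove]
      rw [this]
      simp [he, MeasurableEquiv.piFinSuccAbove_symm_apply, Fin.insertNth_apply_succAbove]
    -- the one-coordinate-peeled formula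
    have hpeel : ∀ u : Fin (d+1) → ℝ,
        JBLam (d+1) {x | ∑ i, (u i - x i)^2 ≤ t}
          = ∫⁻ b, JBLam d {x' | ∑ j, (u (Fin.succ j) - x' j)^2 ≤ t - (u 0 - b)^2} ∂JBlam := by
      intro u
      rw [hmap, MeasurableEquiv.map_apply]
      have hsetm : MeasurableSet {p : ℝ × (Fin d → ℝ) |
          ∑ i, (u i - (e.symm p) i)^2 ≤ t} := by
        apply measurableSet_le _ measurable_const
        apply Finset.measurable_sum
        intro i _
        have : Measurable fun p : ℝ × (Fin d → ℝ) => (e.symm p) i :=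
          (measurable_pi_apply i).comp e.symm.measurable
        exact ((measurable_const.sub this).pow_const 2)
      have : e.symm ⁻¹' {x | ∑ i, (u i - x i)^2 ≤ t}
          = {p : ℝ × (Fin d → ℝ) | ∑ i, (u i - (e.symm p) i)^2 ≤ t} := rfl
      rw [this, Measure.prod_apply hsetm]
      apply lintegral_congr
      intro b
      congr 1
      ext x'
      simp only [mem_preimage, mem_setOf_eq]
      rw [Fin.sum_univ_succ]
      rw [h0 b x']
      have : ∀ j : Fin d, (u (Fin.succ j) - e.symm (b, x') (Fin.succ j))^2
          = (u (Fin.succ j) - x' j)^2 := fun j => by rw [hsucc]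
      rw [Finset.sum_congr rfl fun j _ => this j]
      constructor <;> intro h <;> linarith
    -- antitone H
    set H : ℝ → ℝ≥0∞ := fun s => JBLam d {x' | ∑ j, ((3:ℝ)/4 - x' j)^2 ≤ t - s} with hH
    have hHanti : Antitone H := by
      intro s s' hss'
      apply measure_mono
      intro x hx
      simp only [mem_setOf_eq] at *
      linarith
    have hH1 : ∀ s, H s ≤ 1 := fun s => prob_le_one
    -- RHS equals ∫ H((3/4 - b)^2)
    have hconst0 : (fun _ : Fin (d+1) => (3:ℝ)/4) 0 = (3:ℝ)/4 := rfl
    have hRHS : JBLam (d+1) {x | ∑ i, ((3:ℝ)/4 - x i)^2 ≤ t}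
        = ∫⁻ b, H ((3/4 - b)^2) ∂JBlam := by
      rw [hpeel (fun _ => (3:ℝ)/4)]
    rw [hRHS]
    have hGm : Measurable (fun q : (ℝ × (Fin d → ℝ)) × ℝ =>
        JBLam d {x' | ∑ j, (q.1.2 j - x' j)^2 ≤ t - (q.1.1 - q.2)^2}) := by
      have hs : MeasurableSet {z : ((ℝ × (Fin d → ℝ)) × ℝ) × (Fin d → ℝ) |
          ∑ j, (z.1.1.2 j - z.2 j)^2 ≤ t - (z.1.1.1 - z.1.2)^2} := by
        apply measurableSet_le
        · apply Finset.measurable_sum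
          intro j _
          fun_prop
        · fun_prop
      exact measurable_measure_prodMk_left hs
    have hKm : Measurable (fun q : (Fin d → ℝ) × ℝ =>
        JBLam d {x' | ∑ j, (q.1 j - x' j)^2 ≤ t - (q.2)^2}) := by
      have hs : MeasurableSet {z : ((Fin d → ℝ) × ℝ) × (Fin d → ℝ) |
          ∑ j, (z.1.1 j - z.2 j)^2 ≤ t - (z.1.2)^2} := by
        apply measurableSet_le
        · apply Finset.measurable_sum
          intro j _
          fun_prop
        · fun_prop
      exact measurable_measure_prodMk_left hs
    calc ∫⁻ u, JBLam (d+1) {x | ∑ i, (u i - x i)^2 ≤ t} ∂(JBLam (d+1))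
        = ∫⁻ u, ∫⁻ b, JBLam d
            {x' | ∑ j, (u (Fin.succ j) - x' j)^2 ≤ t - (u 0 - b)^2} ∂JBlam
            ∂(JBLam (d+1)) := lintegral_congr fun u => hpeel u
      _ = ∫⁻ p : ℝ × (Fin d → ℝ), ∫⁻ b, JBLam d
            {x' | ∑ j, (e.symm p (Fin.succ j) - x' j)^2 ≤ t - (e.symm p 0 - b)^2} ∂JBlam
            ∂(JBlam.prod (JBLam d)) := by
          conv_lhs => rw [hmap]
          exact lintegral_map_equiv _ _
      _ = ∫⁻ p : ℝ × (Fin d → ℝ), ∫⁻ b, JBLam d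
            {x' | ∑ j, (p.2 j - x' j)^2 ≤ t - (p.1 - b)^2} ∂JBlam
            ∂(JBlam.prod (JBLam d)) := by
          apply lintegral_congr
          rintro ⟨a, v⟩
          simp only [h0, hsucc]
      _ = ∫⁻ a, ∫⁻ v, ∫⁻ b, JBLam d
            {x' | ∑ j, (v j - x' j)^2 ≤ t - (a - b)^2} ∂JBlam ∂(JBLam d) ∂JBlam := by
          apply lintegral_prod
          apply Measurable.aemeasurable
          apply Measurable.lintegral_prod_right
          exact hGm
      _ = ∫⁻ a, ∫⁻ b, ∫⁻ v, JBLam d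
            {x' | ∑ j, (v j - x' j)^2 ≤ t - (a - b)^2} ∂(JBLam d) ∂JBlam ∂JBlam := by
          apply lintegral_congr
          intro a
          exact lintegral_lintegral_swap (hKm.comp ((measurable_fst).prodMk
            (measurable_const.sub measurable_snd))).aemeasurable
      _ ≤ ∫⁻ a, ∫⁻ b, H ((a - b)^2) ∂JBlam ∂JBlam := by
          apply lintegral_mono
          intro a
          apply lintegral_mono
          intro b
          exact ih (t - (a - b)^2)
      _ = ∫⁻ p : ℝ × ℝ, H ((p.1 - p.2)^2) ∂(JBlam.prod JBlam) := by
          have hm : Measurable fun p : ℝ × ℝ => (p.1 - p.2)^2 := by fun_prop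
          exact (lintegral_prod _ ((hHanti.measurable).comp hm).aemeasurable).symm
      _ ≤ ∫⁻ b, H ((3/4 - b)^2) ∂JBlam :=
          JBB (JBlam.prod JBlam) JBlam (by fun_prop) (by fun_prop) JBA hHanti hH1

lemma JBLam_eq (d : ℕ) :
    (volume : Measure (Fin d → ℝ)).restrict (Set.pi univ fun _ => Icc (0:ℝ) 1)
      = JBLam d := by
  unfold JBLam
  refine (Measure.pi_eq fun s hs => ?_).symm
  rw [Measure.restrict_apply (MeasurableSet.univ_pi hs)]
  have : (Set.pi univ s) ∩ (Set.pi univ fun _ => Icc (0:ℝ) 1)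
      = Set.pi univ fun i => s i ∩ Icc (0:ℝ) 1 := by
    rw [← Set.pi_inter_distrib]
  rw [this, volume_pi_pi]
  exact Finset.prod_congr rfl fun i _ =>
    (Measure.restrict_apply (hs i)).symm

lemma JBpow {α : Type*} [MeasurableSpace α] (μ : Measure α) [IsProbabilityMeasure μ]
    {h : α → ℝ≥0∞} (hm : AEMeasurable h μ) (n : ℕ) (hn : 1 ≤ n) :
    (∫⁻ a, h a ∂μ) ^ n ≤ ∫⁻ a, h a ^ n ∂μ := by
  rcases eq_or_lt_of_le hn with h1 | h1
  · simp [← h1]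
  · have hn2 : (1:ℝ) < (n:ℝ) := by exact_mod_cast h1
    have hpq : (n:ℝ).HolderConjugate (Real.conjExponent n) :=
      Real.HolderConjugate.conjExponent hn2
    have hH := ENNReal.lintegral_mul_le_Lp_mul_Lq μ hpq hm
      (aemeasurable_const : AEMeasurable (fun _ => (1:ℝ≥0∞)) μ)
    simp only [mul_one, ENNReal.one_rpow, lintegral_const, measure_univ, one_mul,
      ENNReal.one_rpow, Pi.mul_apply] at hH
    have hH2 : ∫⁻ a, h a ∂μ ≤ (∫⁻ a, h a ^ n ∂μ) ^ (1/(n:ℝ)) := by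
      calc ∫⁻ a, h a ∂μ ≤ (∫⁻ a, h a ^ (n:ℝ) ∂μ) ^ (1/(n:ℝ)) := by
            simpa using hH
        _ = (∫⁻ a, h a ^ n ∂μ) ^ (1/(n:ℝ)) := by
            congr 1
            apply lintegral_congr
            intro a
            rw [← ENNReal.rpow_natCast]
    calc (∫⁻ a, h a ∂μ) ^ n ≤ ((∫⁻ a, h a ^ n ∂μ) ^ (1/(n:ℝ))) ^ n :=
          pow_le_pow_left' hH2 n
      _ = ∫⁻ a, h a ^ n ∂μ := by
          rw [← ENNReal.rpow_natCast (((∫⁻ a, h a ^ n ∂μ) ^ (1/(n:ℝ)))) n,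
            ← ENNReal.rpow_mul]
          rw [show 1/(n:ℝ) * n = 1 by field_simp, ENNReal.rpow_one]


/-- **Refined Jensen bound (eq. Jensen_main).** Let
`g u = vol(B(u,r) ∩ [0,1]^d)`. Then
`E_U[1 - (1 - g U)^n] ≤ 1 - (1 - g(3/4,…,3/4))^n` for `U` uniform on the
cube. -/
theorem jensen_bound_three_quarters
    {d : ℕ} (hd : 0 < d) (r : ℝ) (hr : 0 < r) (n : ℕ) (hn : 1 ≤ n)
    (cube : Set (EuclideanSpace ℝ (Fin d)))
    (hcube : cube = {u : EuclideanSpace ℝ (Fin d) | ∀ i, u i ∈ Set.Icc (0 : ℝ) 1})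
    (g : EuclideanSpace ℝ (Fin d) → ℝ≥0∞)
    (hg : ∀ u, g u = volume (closedBall u r ∩ cube))
    (c : EuclideanSpace ℝ (Fin d)) (hc : ∀ i, c i = 3 / 4) :
    ∫⁻ u in cube, (1 - (1 - g u) ^ n) ∂volume ≤ 1 - (1 - g c) ^ n := by
  classical
  set φ := (MeasurableEquiv.toLp 2 (Fin d → ℝ)).symm with hφdef
  have hφ : MeasurePreserving φ volume volume :=
    EuclideanSpace.volume_preserving_symm_measurableEquiv_toLp (Fin d)
  set cubeP : Set (Fin d → ℝ) := Set.pi univ fun _ => Icc (0:ℝ) 1 with hcubeP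
  have hφapp : ∀ (u : EuclideanSpace ℝ (Fin d)) (i : Fin d), φ u i = u i := fun u i => rfl
  have hφsymm : ∀ (v : Fin d → ℝ) (i : Fin d), (φ.symm v) i = v i := fun v i => rfl
  have hpre : φ ⁻¹' cubeP = cube := by
    rw [hcube]
    ext u
    simp only [mem_preimage, hcubeP, Set.mem_univ_pi, mem_setOf_eq]
    exact Iff.rfl
  have hcubePmeas : MeasurableSet cubeP :=
    MeasurableSet.univ_pi fun _ => measurableSet_Icc
  have hcubemeas : MeasurableSet cube := by
    rw [← hpre]; exact φ.measurable hcubePmeas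
  have hvolcube : volume cube = 1 := by
    rw [← hpre, hφ.measure_preimage hcubePmeas.nullMeasurableSet, hcubeP, volume_pi_pi]
    simp [Real.volume_Icc]
  -- the ball-set correspondence
  have hball : ∀ u : EuclideanSpace ℝ (Fin d),
      closedBall u r ∩ cube = φ ⁻¹' ({x | ∑ i, ((φ u) i - x i)^2 ≤ r^2} ∩ cubeP) := by
    intro u
    rw [preimage_inter, hpre]
    congr 1
    ext y
    simp only [mem_closedBall, mem_preimage, mem_setOf_eq]
    rw [dist_comm, EuclideanSpace.dist_eq]
    rw [Real.sqrt_le_iff]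
    constructor
    · rintro ⟨-, h2⟩
      calc ∑ i, (φ u i - φ y i)^2 = ∑ i, dist (u i) (y i) ^ 2 := by
            apply Finset.sum_congr rfl
            intro i _
            rw [Real.dist_eq, sq_abs, hφapp, hφapp]
        _ ≤ r^2 := h2
    · intro h
      refine ⟨hr.le, ?_⟩
      calc ∑ i, dist (u i) (y i) ^ 2 = ∑ i, (φ u i - φ y i)^2 := by
            apply Finset.sum_congr rfl
            intro i _
            rw [Real.dist_eq, sq_abs, hφapp, hφapp]
        _ ≤ r^2 := h
  have hsum_meas : ∀ v : Fin d → ℝ,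
      MeasurableSet {x : Fin d → ℝ | ∑ i, (v i - x i)^2 ≤ r^2} := by
    intro v
    apply measurableSet_le _ measurable_const
    apply Finset.measurable_sum
    intro i _
    fun_prop
  have hgP : ∀ u : EuclideanSpace ℝ (Fin d),
      g u = JBLam d {x | ∑ i, ((φ u) i - x i)^2 ≤ r^2} := by
    intro u
    rw [hg, hball, hφ.measure_preimage, ← JBLam_eq d,
      Measure.restrict_apply (hsum_meas (φ u))]
    exact ((hsum_meas (φ u)).inter hcubePmeas).nullMeasurableSet
  -- measurability of g
  have hgmeas : Measurable g := by
    have hs : MeasurableSet {p : EuclideanSpace ℝ (Fin d) × EuclideanSpace ℝ (Fin d) |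
        dist p.2 p.1 ≤ r ∧ p.2 ∈ cube} := by
      apply MeasurableSet.inter
      · exact measurableSet_le (measurable_snd.dist measurable_fst) measurable_const
      · exact hcubemeas.preimage measurable_snd
    have hmm := measurable_measure_prodMk_left (ν := volume) hs
    have hfun : g = fun u => volume (Prod.mk u ⁻¹'
        {p : EuclideanSpace ℝ (Fin d) × EuclideanSpace ℝ (Fin d) |
          dist p.2 p.1 ≤ r ∧ p.2 ∈ cube}) := by
      funext u
      rw [hg]
      apply congrArg
      ext y
      simp [mem_closedBall]
    rw [hfun]
    exact hmm
  have hgle : ∀ u, g u ≤ 1 := by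
    intro u
    rw [hg]
    calc volume (closedBall u r ∩ cube) ≤ volume cube :=
          measure_mono inter_subset_right
      _ = 1 := hvolcube
  -- Step 4 : ∫ g ≤ g c
  have hmpsymm : MeasurePreserving (⇑φ.symm) (volume : Measure (Fin d → ℝ)) volume :=
    MeasurePreserving.symm φ hφ
  have hstep4 : ∫⁻ u in cube, g u ∂volume ≤ g c := by
    have hrestrict : (volume : Measure (EuclideanSpace ℝ (Fin d))).restrict cube
        = ((volume : Measure (Fin d → ℝ)).restrict cubeP).map φ.symm := by
      have h1 := Measure.restrict_map (μ := (volume : Measure (Fin d → ℝ)))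
        φ.symm.measurable hcubemeas
      rw [hmpsymm.map_eq] at h1
      rw [h1]
      congr 1
      rw [← hpre, Set.preimage_preimage]
      simp
    calc ∫⁻ u in cube, g u ∂volume
        = ∫⁻ v, g (φ.symm v) ∂((volume : Measure (Fin d → ℝ)).restrict cubeP) := by
          rw [hrestrict]
          exact lintegral_map_equiv _ _
      _ = ∫⁻ v, JBLam d {x | ∑ i, (v i - x i)^2 ≤ r^2} ∂(JBLam d) := by
          rw [JBLam_eq d]
          apply lintegral_congr
          intro v
          rw [hgP (φ.symm v)]
          apply congrArg
          ext x
          simp only [mem_setOf_eq, MeasurableEquiv.apply_symm_apply]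
      _ ≤ JBLam d {x | ∑ i, ((3:ℝ)/4 - x i)^2 ≤ r^2} := JBkey d (r^2)
      _ = g c := by
          rw [hgP c]
          congr 1
          ext x
          simp only [mem_setOf_eq]
          have : ∀ i : Fin d, (φ c i - x i)^2 = ((3:ℝ)/4 - x i)^2 := fun i => by
            rw [hφapp, hc]
          rw [Finset.sum_congr rfl fun i _ => this i]
  -- final assembly
  have hprob : IsProbabilityMeasure
      ((volume : Measure (EuclideanSpace ℝ (Fin d))).restrict cube) :=
    ⟨by rw [Measure.restrict_apply_univ]; exact hvolcube⟩
  set μc := (volume : Measure (EuclideanSpace ℝ (Fin d))).restrict cube with hμc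
  have hhm : Measurable fun u => (1 - g u)^n := (measurable_const.sub hgmeas).pow_const n
  have hhle1 : ∀ u, (1 - g u)^n ≤ 1 := fun u => pow_le_one' tsub_le_self n
  have hfin : ∫⁻ u, (1 - g u)^n ∂μc ≠ ∞ := by
    have hle : ∫⁻ u, (1 - g u)^n ∂μc ≤ 1 := by
      calc ∫⁻ u, (1 - g u)^n ∂μc ≤ ∫⁻ _, 1 ∂μc := lintegral_mono fun u => hhle1 u
        _ = 1 := by simp
    exact ne_top_of_le_ne_top ENNReal.one_ne_top hle
  have hgfin : ∫⁻ u, g u ∂μc ≠ ∞ := by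
    have hle : ∫⁻ u, g u ∂μc ≤ 1 := by
      calc ∫⁻ u, g u ∂μc ≤ ∫⁻ _, 1 ∂μc := lintegral_mono fun u => hgle u
        _ = 1 := by simp
    exact ne_top_of_le_ne_top ENNReal.one_ne_top hle
  have h1 : ∫⁻ u in cube, (1 - (1 - g u)^n) ∂volume
      = 1 - ∫⁻ u, (1 - g u)^n ∂μc := by
    rw [show (∫⁻ u in cube, (1 - (1 - g u)^n) ∂volume)
        = ∫⁻ u, ((fun _ => (1:ℝ≥0∞)) u - (fun u => (1 - g u)^n) u) ∂μc from rfl]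
    rw [lintegral_sub hhm hfin (Filter.Eventually.of_forall hhle1)]
    simp
  rw [h1]
  apply tsub_le_tsub_left
  calc (1 - g c)^n ≤ (1 - ∫⁻ u, g u ∂μc)^n := by
        apply pow_le_pow_left'
        exact tsub_le_tsub_left hstep4 1
    _ = (∫⁻ u, (1 - g u) ∂μc)^n := by
        congr 1
        rw [show (∫⁻ u, (1 - g u) ∂μc)
            = ∫⁻ u, ((fun _ => (1:ℝ≥0∞)) u - (fun u => g u) u) ∂μc from rfl]
        rw [lintegral_sub hgmeas hgfin (Filter.Eventually.of_forall hgle)]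
        simp
    _ ≤ ∫⁻ u, (1 - g u)^n ∂μc :=
        JBpow μc (measurable_const.sub hgmeas).aemeasurable n hn
end
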